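/- (Forward direction of the generalized Elfving theorem, algebraic core.) Let f_1, …, f_k : X → ℝ^p, let ξ have support x_1,…,x_m with weights p_r > 0, ∑ p_r = 1, and information matrix M = ∑_r p_r ∑_ℓ f_ℓ(x_r) f_ℓ(x_r)^T. Suppose d ∈ ℝ^p satisfies (i) ∑_ℓ (d^T f_ℓ(x))² ≤ 1 for all x ∈ X and (ii) ∑_ℓ (d^T f_ℓ(x_r))² = 1 for all r = 1,…,m. Set c = M d (assume c ≠ 0) and ε_{ℓ r} = d^T f_ℓ(x_r). Then ∑_ℓ ε_{ℓ r}² = 1 for all r, c = ∑_r p_r ∑_ℓ ε_{ℓ r} f_ℓ(x_r), and c lies on the boundary of the generalized Elfving set R_k = conv{ ∑_ℓ ε_ℓ f_ℓ(x) : x ∈ X, ‖ε‖ = 1 } (i.e., c ∈ R_k and d^T z ≤ 1 = d^T c for all z ∈ R_k). -/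
import Mathlib


open Matrix Finset

private lemma dot_sum {n ι : Type*} [Fintype n] (s : Finset ι) (d : n → ℝ)
    (g : ι → n → ℝ) : d ⬝ᵥ (∑ i ∈ s, g i) = ∑ i ∈ s, d ⬝ᵥ g i := by
  simp only [dotProduct, Finset.sum_apply, Finset.mul_sum]
  exact Finset.sum_comm

private lemma dot_smul' {n : Type*} [Fintype n] (a : ℝ) (d v : n → ℝ) :
    d ⬝ᵥ (a • v) = a * (d ⬝ᵥ v) := by
  simp only [dotProduct, Pi.smul_apply, smul_eq_mul, Finset.mul_sum]
  exact Finset.sum_congr rfl fun i _ => by ring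

private lemma sum_mulVec' {n ι : Type*} [Fintype n] (s : Finset ι)
    (A : ι → Matrix n n ℝ) (d : n → ℝ) :
    (∑ i ∈ s, A i) *ᵥ d = ∑ i ∈ s, A i *ᵥ d := by
  ext j
  simp only [mulVec, dotProduct, Matrix.sum_apply, Finset.sum_apply, Finset.sum_mul]
  exact Finset.sum_comm

private lemma vecMulVec_mulVec' {n : Type*} [Fintype n] (u v d : n → ℝ) :
    vecMulVec u v *ᵥ d = (v ⬝ᵥ d) • u := by
  ext i
  simp only [mulVec, dotProduct, vecMulVec_apply, Pi.smul_apply, smul_eq_mul,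
    Finset.mul_sum]
  rw [Finset.sum_mul]
  exact Finset.sum_congr rfl fun j _ => by ring

theorem elfving_forward_direction
    {X : Type*} [Nonempty X] {p k m : ℕ}
    (f : Fin k → X → Fin p → ℝ) (x : Fin m → X) (w : Fin m → ℝ)
    (hw : ∀ r, 0 < w r) (hw1 : ∑ r, w r = 1)
    (M : Matrix (Fin p) (Fin p) ℝ)
    (hM : M = ∑ r, w r • (∑ ℓ, vecMulVec (f ℓ (x r)) (f ℓ (x r))))
    (d : Fin p → ℝ)
    (hbd : ∀ y : X, ∑ ℓ, (d ⬝ᵥ f ℓ y) ^ 2 ≤ 1)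
    (heq : ∀ r, ∑ ℓ, (d ⬝ᵥ f ℓ (x r)) ^ 2 = 1)
    (c : Fin p → ℝ) (hc : c = M *ᵥ d) (hc0 : c ≠ 0)
    (ε : Fin m → Fin k → ℝ) (hε : ∀ r ℓ, ε r ℓ = d ⬝ᵥ f ℓ (x r)) :
    (∀ r, ∑ ℓ, ε r ℓ ^ 2 = 1) ∧
    c = ∑ r, w r • (∑ ℓ, ε r ℓ • f ℓ (x r)) ∧
    c ∈ convexHull ℝ {z : Fin p → ℝ |
        ∃ (y : X) (e : Fin k → ℝ), (∑ ℓ, e ℓ ^ 2 = 1) ∧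
          z = ∑ ℓ, e ℓ • f ℓ y} ∧
    d ⬝ᵥ c = 1 ∧
    (∀ z ∈ convexHull ℝ {z : Fin p → ℝ |
        ∃ (y : X) (e : Fin k → ℝ), (∑ ℓ, e ℓ ^ 2 = 1) ∧
          z = ∑ ℓ, e ℓ • f ℓ y},
      d ⬝ᵥ z ≤ 1) := by
  have hnorm : ∀ r, ∑ ℓ, ε r ℓ ^ 2 = 1 := by
    intro r; simp only [hε]; exact heq r
  have hcsum : c = ∑ r, w r • (∑ ℓ, ε r ℓ • f ℓ (x r)) := by
    rw [hc, hM, sum_mulVec']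
    refine Finset.sum_congr rfl fun r _ => ?_
    rw [smul_mulVec, sum_mulVec']
    congr 1
    refine Finset.sum_congr rfl fun ℓ _ => ?_
    rw [vecMulVec_mulVec', hε, dotProduct_comm]
  set S : Set (Fin p → ℝ) := {z : Fin p → ℝ |
      ∃ (y : X) (e : Fin k → ℝ), (∑ ℓ, e ℓ ^ 2 = 1) ∧ z = ∑ ℓ, e ℓ • f ℓ y}
  have hmem : c ∈ convexHull ℝ S := by
    rw [hcsum]
    refine (convex_convexHull ℝ S).sum_mem (fun r _ => (hw r).le) hw1 ?_
    intro r _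
    exact subset_convexHull ℝ S ⟨x r, ε r, hnorm r, rfl⟩
  have hdot : ∀ z ∈ S, d ⬝ᵥ z ≤ 1 := by
    rintro z ⟨y, e, he, rfl⟩
    have hz : d ⬝ᵥ (∑ ℓ, e ℓ • f ℓ y) = ∑ ℓ, e ℓ * (d ⬝ᵥ f ℓ y) := by
      rw [dot_sum]
      exact Finset.sum_congr rfl fun ℓ _ => dot_smul' _ _ _
    rw [hz]
    have h2 : (∑ ℓ, e ℓ * (d ⬝ᵥ f ℓ y)) ^ 2 ≤
        (∑ ℓ, e ℓ ^ 2) * (∑ ℓ, (d ⬝ᵥ f ℓ y) ^ 2) :=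
      Finset.sum_mul_sq_le_sq_mul_sq Finset.univ e (fun ℓ => d ⬝ᵥ f ℓ y)
    have h3 : (∑ ℓ, e ℓ * (d ⬝ᵥ f ℓ y)) ^ 2 ≤ 1 := by
      calc (∑ ℓ, e ℓ * (d ⬝ᵥ f ℓ y)) ^ 2
          ≤ (∑ ℓ, e ℓ ^ 2) * (∑ ℓ, (d ⬝ᵥ f ℓ y) ^ 2) := h2
        _ ≤ 1 * 1 := by
            apply mul_le_mul (le_of_eq he) (hbd y) ?_ zero_le_one
            exact Finset.sum_nonneg fun ℓ _ => sq_nonneg _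
        _ = 1 := one_mul 1
    nlinarith [h3]
  have hbound : ∀ z ∈ convexHull ℝ S, d ⬝ᵥ z ≤ 1 := by
    intro z hz
    have hsub : convexHull ℝ S ⊆ {z | d ⬝ᵥ z ≤ 1} := by
      apply convexHull_min hdot
      exact convex_halfSpace_le ⟨fun a b => dotProduct_add d a b,
        fun t a => by simp [dot_smul' t d a]⟩ 1
    exact hsub hz
  have hdc : d ⬝ᵥ c = 1 := by
    rw [hcsum, dot_sum]
    have key : ∀ r : Fin m, d ⬝ᵥ (w r • ∑ ℓ, ε r ℓ • f ℓ (x r)) = w r := by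
      intro r
      rw [dot_smul', dot_sum]
      have h1 : ∑ ℓ, d ⬝ᵥ (ε r ℓ • f ℓ (x r)) = ∑ ℓ, (d ⬝ᵥ f ℓ (x r)) ^ 2 := by
        refine Finset.sum_congr rfl fun ℓ _ => ?_
        rw [dot_smul', hε]; ring
      rw [h1, heq r, mul_one]
    rw [Finset.sum_congr rfl fun r _ => key r, hw1]
  exact ⟨hnorm, hcsum, hmem, hdc, hbound⟩
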